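/- Let G be a finite group, N ⊴ G, and let B = b^G, C = c^G be noncentral G-conjugacy classes contained in N with gcd(|B|, |C|) = 1. Then the product set BC equals CB, BC is a single G-conjugacy class contained in N, and |BC| divides |B|·|C|. -/

import Mathlib

open Pointwise

def classSet {G : Type*} [Group G] (x : G) : Set G := {y | IsConj x y}

noncomputable def classSize {G : Type*} [Group G] (x : G) : ℕ := Nat.card (classSet x)

lemma aux_index_inf {G : Type*} [Group G] [Finite G] (H K : Subgroup G)
    (hco : Nat.Coprime H.index K.index) : (H ⊓ K).index = H.index * K.index := by
  refine le_antisymm Subgroup.index_inf_le (Nat.le_of_dvd ?_ ?_)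
  · exact Nat.pos_of_ne_zero Subgroup.index_ne_zero_of_finite
  · exact Nat.Coprime.mul_dvd_of_dvd_of_dvd hco
      (Subgroup.index_dvd_of_le inf_le_left) (Subgroup.index_dvd_of_le inf_le_right)

lemma aux_decomp {G : Type*} [Group G] [Finite G] (H K : Subgroup G)
    (hco : Nat.Coprime H.index K.index) (g : G) : ∃ k ∈ K, ∃ h ∈ H, g = k * h := by
  have hK : K.index ≠ 0 := Subgroup.index_ne_zero_of_finite
  have hrel : H.relIndex K = H.index := by
    have h1 : H.relIndex K * K.index = H.index * K.index := by
      rw [← Subgroup.inf_relIndex_right, Subgroup.relIndex_mul_index inf_le_right,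
        aux_index_inf H K hco]
    exact Nat.eq_of_mul_eq_mul_right (Nat.pos_of_ne_zero hK) h1
  have hstab : MulAction.stabilizer K ((1 : G) : G ⧸ H) = H.subgroupOf K := by
    ext k
    rw [MulAction.mem_stabilizer_iff, Subgroup.mem_subgroupOf]
    change (k : G) • ((1 : G) : G ⧸ H) = ((1 : G) : G ⧸ H) ↔ _
    rw [← MulAction.mem_stabilizer_iff, MulAction.stabilizer_quotient]
  have horb : MulAction.orbit K ((1 : G) : G ⧸ H) = Set.univ := by
    apply Set.eq_of_subset_of_ncard_le (Set.subset_univ _)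
    rw [Set.ncard_univ, ← MulAction.index_stabilizer, hstab]
    rw [show (H.subgroupOf K).index = H.relIndex K from rfl, hrel]
    exact le_of_eq (Subgroup.index_eq_card H)
  have hg : ((g : G) : G ⧸ H) ∈ MulAction.orbit K ((1 : G) : G ⧸ H) := by
    rw [horb]; trivial
  obtain ⟨k, hk⟩ := hg
  have hk' : ((k : G) : G ⧸ H) = (g : G ⧸ H) := by
    rw [← hk]
    show _ = (k : G) • ((1 : G) : G ⧸ H)
    rw [MulAction.Quotient.smul_mk, smul_eq_mul, mul_one]
  have hmem : (k : G)⁻¹ * g ∈ H := QuotientGroup.eq.mp hk'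
  exact ⟨k, k.2, (k : G)⁻¹ * g, hmem, by group⟩

lemma classSet_eq_orbit {G : Type*} [Group G] (x : G) :
    classSet x = MulAction.orbit (ConjAct G) x := by
  ext y
  rw [ConjAct.mem_orbit_conjAct, classSet, Set.mem_setOf_eq, isConj_comm]

lemma classSize_eq_index {G : Type*} [Group G] (x : G) :
    classSize x = (MulAction.stabilizer (ConjAct G) x).index := by
  rw [MulAction.index_stabilizer, classSize, classSet_eq_orbit, Nat.card_coe_set_eq]

lemma classSet_mul_classSet {G : Type*} [Group G] [Finite G] (b c : G)
    (h : Nat.Coprime (classSize b) (classSize c)) :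
    classSet b * classSet c = classSet (b * c) := by
  haveI : Finite (ConjAct G) := ‹Finite G›
  set H := MulAction.stabilizer (ConjAct G) b with hH
  set K := MulAction.stabilizer (ConjAct G) c with hK
  have hco : Nat.Coprime H.index K.index := by
    rw [← classSize_eq_index, ← classSize_eq_index]; exact h
  have key : ∀ g : ConjAct G, IsConj (b * c) (b * g • c) := by
    intro g
    obtain ⟨h', hh', k, hk, rfl⟩ := aux_decomp K H hco.symm g
    have hkc : k • c = c := hk
    have hhb : h' • b = b := hh'
    have h1 : (h' * k) • c = h' • c := by
      rw [mul_smul, hkc]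
    have h2 : b * (h' * k) • c = h' • (b * c) := by
      rw [h1, smul_mul', hhb]
    rw [h2]
    exact ((ConjAct.mem_orbit_conjAct).mp (MulAction.mem_orbit _ h')).symm
  ext x
  constructor
  · rintro ⟨u, hu, v, hv, rfl⟩
    rw [classSet_eq_orbit] at hu hv
    obtain ⟨a, rfl⟩ := hu
    obtain ⟨g, rfl⟩ := hv
    have he : (a • b) * (g • c) = a • (b * (a⁻¹ * g) • c) := by
      rw [smul_mul', smul_smul]
      simp
    have h1 : IsConj (b * c) (b * (a⁻¹ * g) • c) := key _
    have h2 : IsConj (b * (a⁻¹ * g) • c) (a • (b * (a⁻¹ * g) • c)) :=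
      ((ConjAct.mem_orbit_conjAct).mp (MulAction.mem_orbit _ a)).symm
    show IsConj (b * c) ((a • b) * (g • c))
    rw [he]
    exact h1.trans h2
  · intro hx
    have hx' : IsConj (b * c) x := hx
    obtain ⟨g, rfl⟩ := (classSet_eq_orbit (b * c)) ▸ (show x ∈ classSet (b*c) from hx')
    exact ⟨g • b, (classSet_eq_orbit b) ▸ MulAction.mem_orbit b g,
      g • c, (classSet_eq_orbit c) ▸ MulAction.mem_orbit c g, (smul_mul' g b c).symm⟩

lemma classSet_eq_of_isConj {G : Type*} [Group G] {x y : G} (h : IsConj x y) :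
    classSet x = classSet y := by
  ext z
  exact ⟨fun hz => h.symm.trans hz, fun hz => h.trans hz⟩

theorem stmt7 {G : Type*} [Group G] [Finite G] (N : Subgroup G) (hN : N.Normal)
    (b c : G) (hb : b ∈ N) (hc : c ∈ N)
    (hbc : b ∉ Subgroup.center G) (hcc : c ∉ Subgroup.center G)
    (h : Nat.Coprime (classSize b) (classSize c)) :
    classSet b * classSet c = classSet c * classSet b ∧
    (∃ d ∈ N, classSet b * classSet c = classSet d) ∧
    Nat.card ↥(classSet b * classSet c) ∣ Nat.card ↥(classSet b) * Nat.card ↥(classSet c) := by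
  haveI : Finite (ConjAct G) := ‹Finite G›
  have hbc' : IsConj (b * c) (c * b) := by
    rw [isConj_iff]
    exact ⟨b⁻¹, by group⟩
  have hBC := classSet_mul_classSet b c h
  have hCB := classSet_mul_classSet c b h.symm
  refine ⟨?_, ⟨b * c, N.mul_mem hb hc, hBC⟩, ?_⟩
  · rw [hBC, hCB, classSet_eq_of_isConj hbc']
  · rw [hBC]
    have hsub : MulAction.stabilizer (ConjAct G) b ⊓ MulAction.stabilizer (ConjAct G) c ≤
        MulAction.stabilizer (ConjAct G) (b * c) := by
      rintro g ⟨hg1, hg2⟩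
      rw [MulAction.mem_stabilizer_iff] at *
      rw [smul_mul', hg1, hg2]
    have hco : Nat.Coprime (MulAction.stabilizer (ConjAct G) b).index
        (MulAction.stabilizer (ConjAct G) c).index := by
      rw [← classSize_eq_index, ← classSize_eq_index]; exact h
    have := Subgroup.index_dvd_of_le hsub
    rw [aux_index_inf _ _ hco] at this
    show classSize (b * c) ∣ classSize b * classSize c
    rw [classSize_eq_index, classSize_eq_index, classSize_eq_index]
    exact this
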